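/- For all ordinals α and β, the natural (Hessenberg) sum α ♯ β equals the supremum, over all natural numbers n and all decompositions α = α₁ + ⋯ + αₙ and β = β₁ + ⋯ + βₙ into ordinal sums, of the shuffled ordinal sum α₁ + β₁ + α₂ + β₂ + ⋯ + αₙ + βₙ. -/

import Mathlib

universe u

namespace Ordinal

noncomputable def nadd : Ordinal.{u} → Ordinal.{u} → Ordinal.{u}
  | a, b =>
    max (blsub.{u, u} a fun a' _ => nadd a' b) (blsub.{u, u} b fun b' _ => nadd a b')
termination_by o₁ o₂ => (o₁, o₂)

end Ordinal

infixl:65 " ♯ " => Ordinal.nadd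

open Ordinal

open Ordinal Order

private theorem nadd_def' (a b : Ordinal.{u}) :
    a ♯ b = max (blsub.{u, u} a fun a' _ => a' ♯ b) (blsub.{u, u} b fun b' _ => a ♯ b') := by
  rw [Ordinal.nadd]

private theorem lt_nadd_iff {a b c : Ordinal.{u}} :
    a < b ♯ c ↔ (∃ b' < b, a ≤ b' ♯ c) ∨ ∃ c' < c, a ≤ b ♯ c' := by
  rw [nadd_def']
  simp [lt_blsub_iff]

private theorem nadd_le_iff {a b c : Ordinal.{u}} :
    b ♯ c ≤ a ↔ (∀ b' < b, b' ♯ c < a) ∧ ∀ c' < c, b ♯ c' < a := by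
  rw [nadd_def']
  simp [blsub_le_iff]

private theorem nadd_lt_nadd_left {b c : Ordinal.{u}} (h : b < c) (a : Ordinal.{u}) :
    a ♯ b < a ♯ c :=
  lt_nadd_iff.2 (Or.inr ⟨b, h, le_rfl⟩)

private theorem nadd_lt_nadd_right {b c : Ordinal.{u}} (h : b < c) (a : Ordinal.{u}) :
    b ♯ a < c ♯ a :=
  lt_nadd_iff.2 (Or.inl ⟨b, h, le_rfl⟩)

private theorem nadd_le_nadd_left {b c : Ordinal.{u}} (h : b ≤ c) (a : Ordinal.{u}) :
    a ♯ b ≤ a ♯ c := by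
  rcases lt_or_eq_of_le h with h | rfl
  · exact (nadd_lt_nadd_left h a).le
  · exact le_rfl

private theorem nadd_le_nadd_right {b c : Ordinal.{u}} (h : b ≤ c) (a : Ordinal.{u}) :
    b ♯ a ≤ c ♯ a := by
  rcases lt_or_eq_of_le h with h | rfl
  · exact (nadd_lt_nadd_right h a).le
  · exact le_rfl

private theorem nadd_lt_nadd {a b c d : Ordinal.{u}} (h₁ : a < b) (h₂ : c < d) :
    a ♯ c < b ♯ d :=
  (nadd_le_nadd_left h₂.le a).trans_lt (nadd_lt_nadd_right h₁ d)

private theorem nadd_comm_le (a b : Ordinal.{u}) : a ♯ b ≤ b ♯ a := by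
  induction a using Ordinal.induction generalizing b with
  | _ a IHa =>
  induction b using Ordinal.induction with
  | _ b IHb =>
  rw [nadd_le_iff]
  constructor
  · intro a' ha'
    exact (IHa a' ha' b).trans_lt (nadd_lt_nadd_left ha' b)
  · intro b' hb'
    exact (IHb b' hb').trans_lt (nadd_lt_nadd_right hb' a)

private theorem nadd_comm (a b : Ordinal.{u}) : a ♯ b = b ♯ a :=
  le_antisymm (nadd_comm_le a b) (nadd_comm_le b a)

private theorem nadd_assoc (a b c : Ordinal.{u}) : a ♯ b ♯ c = a ♯ (b ♯ c) := by
  induction a using Ordinal.induction generalizing b c with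
  | _ a IHa =>
  induction b using Ordinal.induction generalizing c with
  | _ b IHb =>
  induction c using Ordinal.induction with
  | _ c IHc =>
  apply le_antisymm
  · rw [nadd_le_iff]
    constructor
    · intro x hx
      rcases lt_nadd_iff.1 hx with ⟨a', ha', hx'⟩ | ⟨b', hb', hx'⟩
      · calc x ♯ c ≤ a' ♯ b ♯ c := nadd_le_nadd_right hx' c
          _ = a' ♯ (b ♯ c) := IHa a' ha' b c
          _ < a ♯ (b ♯ c) := nadd_lt_nadd_right ha' _
      · calc x ♯ c ≤ a ♯ b' ♯ c := nadd_le_nadd_right hx' c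
          _ = a ♯ (b' ♯ c) := IHb b' hb' c
          _ < a ♯ (b ♯ c) := nadd_lt_nadd_left (nadd_lt_nadd_right hb' c) a
    · intro c' hc'
      rw [IHc c' hc']
      exact nadd_lt_nadd_left (nadd_lt_nadd_left hc' b) a
  · rw [nadd_le_iff]
    constructor
    · intro a' ha'
      rw [← IHa a' ha' b c]
      exact nadd_lt_nadd_right (nadd_lt_nadd_right ha' b) c
    · intro x hx
      rcases lt_nadd_iff.1 hx with ⟨b', hb', hx'⟩ | ⟨c', hc', hx'⟩
      · calc a ♯ x ≤ a ♯ (b' ♯ c) := nadd_le_nadd_left hx' a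
          _ = a ♯ b' ♯ c := (IHb b' hb' c).symm
          _ < a ♯ b ♯ c := nadd_lt_nadd_right (nadd_lt_nadd_left hb' a) c
      · calc a ♯ x ≤ a ♯ (b ♯ c') := nadd_le_nadd_left hx' a
          _ = a ♯ b ♯ c' := (IHc c' hc').symm
          _ < a ♯ b ♯ c := nadd_lt_nadd_left hc' _

private theorem nadd_right_comm (a b c : Ordinal.{u}) : a ♯ b ♯ c = a ♯ c ♯ b := by
  rw [nadd_assoc, nadd_comm b c, ← nadd_assoc]

@[simp] private theorem nadd_zero (a : Ordinal.{u}) : a ♯ 0 = a := by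
  induction a using Ordinal.induction with
  | _ a IH =>
  apply le_antisymm
  · rw [nadd_le_iff]
    exact ⟨fun a' ha' => by rwa [IH a' ha'], fun c' hc' => by simp at hc'⟩
  · refine le_of_forall_lt fun x hx => ?_
    rw [← IH x hx]
    exact nadd_lt_nadd_right hx 0

@[simp] private theorem zero_nadd (a : Ordinal.{u}) : 0 ♯ a = a := by
  rw [nadd_comm, nadd_zero]

private theorem nadd_succ {a b : Ordinal.{u}} : a ♯ succ b = succ (a ♯ b) := by
  induction a using Ordinal.induction with
  | _ a IH =>
  apply le_antisymm
  · rw [nadd_le_iff]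
    constructor
    · intro a' ha'
      rw [IH a' ha', Order.succ_lt_succ_iff]
      exact nadd_lt_nadd_right ha' b
    · intro c' hc'
      exact Order.lt_succ_iff.2 (nadd_le_nadd_left (Order.lt_succ_iff.1 hc') a)
  · exact Order.succ_le_of_lt (nadd_lt_nadd_left (Order.lt_succ b) a)

private theorem nadd_nat (a : Ordinal.{u}) (n : ℕ) : a ♯ (n : Ordinal.{u}) = a + n := by
  induction n with
  | zero => simp
  | succ n hn => rw [Nat.cast_succ, ← Order.succ_eq_add_one, nadd_succ, hn, add_succ]

private theorem nadd_add_le' (x y z : Ordinal.{u}) : (x ♯ y) + z ≤ x ♯ (y + z) := by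
  induction z using Ordinal.limitRecOn with
  | zero => simp
  | add_one z ih =>
      rw [← Order.succ_eq_add_one, add_succ, add_succ, nadd_succ]
      exact Order.succ_le_succ ih
  | limit z hz ih =>
      rw [Ordinal.add_le_iff_of_isSuccLimit hz]
      intro z' hz'
      exact (ih z' hz').trans (nadd_le_nadd_left (add_le_add_right hz'.le y) x)

private theorem add_le_nadd (a b : Ordinal.{u}) : a + b ≤ a ♯ b := by
  simpa using nadd_add_le' a 0 b

private theorem add_nadd_le' (x y z : Ordinal.{u}) : (x ♯ y) + z ≤ (x + z) ♯ y := by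
  calc (x ♯ y) + z = (y ♯ x) + z := by rw [nadd_comm]
    _ ≤ y ♯ (x + z) := nadd_add_le' y x z
    _ = (x + z) ♯ y := nadd_comm _ _

private theorem zip_sum_le' (as : List Ordinal.{u}) : ∀ bs : List Ordinal.{u},
    as.length = bs.length → (List.zipWith (· + ·) as bs).sum ≤ as.sum ♯ bs.sum := by
  induction as using List.reverseRecOn with
  | nil =>
      intro bs h
      have : bs = [] := List.length_eq_zero_iff.mp h.symm
      subst this; simp
  | append_singleton as a ih =>
      intro bs h
      rcases bs.eq_nil_or_concat with rfl | ⟨bs', b, rfl⟩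
      on_goal 2 => simp only [List.concat_eq_append] at *
      · simp at h
      · simp only [List.length_append, List.length_singleton] at h
        have hlen : as.length = bs'.length := by omega
        rw [List.zipWith_append hlen]
        simp only [List.sum_append, List.zipWith_cons_cons, List.zipWith_nil_right,
          List.sum_cons, List.sum_nil, add_zero]
        calc (List.zipWith (· + ·) as bs').sum + (a + b)
            ≤ (as.sum ♯ bs'.sum) + (a + b) := add_le_add_left (ih bs' hlen) _
          _ = ((as.sum ♯ bs'.sum) + a) + b := (add_assoc _ _ _).symm
          _ ≤ ((as.sum + a) ♯ bs'.sum) + b := add_le_add_left (add_nadd_le' _ _ _) b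
          _ ≤ (as.sum + a) ♯ (bs'.sum + b) := nadd_add_le' _ _ _

private theorem triple' : ∀ b : Ordinal.{u},
    (∀ r s, r < ω ^ b → s < ω ^ b → r ♯ s < ω ^ b) ∧
    (∀ γ t, t < ω ^ b → (ω ^ b * γ) ♯ t = ω ^ b * γ + t) ∧
    (∀ σ τ, (ω ^ b * σ) ♯ (ω ^ b * τ) = ω ^ b * (σ ♯ τ)) := by
  intro b
  induction b using Ordinal.induction with
  | _ b IH =>
  have hω0 : (ω : Ordinal.{u}) ^ b ≠ 0 := opow_ne_zero b omega0_ne_zero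
  have hN : ∀ r s, r < ω ^ b → s < ω ^ b → r ♯ s < ω ^ b := by
    rcases Ordinal.zero_or_succ_or_isSuccLimit b with rfl | ⟨d, rfl⟩ | hb
    · intro r s hr hs
      rw [opow_zero, Ordinal.lt_one_iff_zero] at hr hs
      subst hr; subst hs
      simpa using zero_lt_one
    · intro r s hr hs
      rw [opow_succ] at hr hs ⊢
      obtain ⟨m', hm', hrm⟩ := (lt_mul_iff_of_isSuccLimit isSuccLimit_omega0).1 hr
      obtain ⟨n', hn', hsn⟩ := (lt_mul_iff_of_isSuccLimit isSuccLimit_omega0).1 hs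
      obtain ⟨m, rfl⟩ := lt_omega0.1 hm'
      obtain ⟨n, rfl⟩ := lt_omega0.1 hn'
      have h1 : r ♯ s < (ω ^ d * m) ♯ (ω ^ d * n) := nadd_lt_nadd hrm hsn
      rw [(IH d (lt_succ d)).2.2 m n] at h1
      refine h1.trans_le ?_
      have h2 : (m : Ordinal.{u}) ♯ (n : Ordinal.{u}) = ((m + n : ℕ) : Ordinal.{u}) := by
        rw [nadd_nat, Nat.cast_add]
      rw [h2]
      exact mul_le_mul_right (le_of_lt (nat_lt_omega0 _)) _
    · intro r s hr hs
      obtain ⟨b₁, hb₁, hrb⟩ := (lt_opow_of_isSuccLimit omega0_ne_zero hb).1 hr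
      obtain ⟨b₂, hb₂, hsb⟩ := (lt_opow_of_isSuccLimit omega0_ne_zero hb).1 hs
      have hd : max b₁ b₂ < b := max_lt hb₁ hb₂
      have hmr : r < ω ^ max b₁ b₂ :=
        hrb.trans_le (opow_le_opow_right omega0_pos (le_max_left _ _))
      have hms : s < ω ^ max b₁ b₂ :=
        hsb.trans_le (opow_le_opow_right omega0_pos (le_max_right _ _))
      exact ((IH _ hd).1 r s hmr hms).trans_le
        (opow_le_opow_right omega0_pos hd.le)
  have hT : ∀ γ t, t < ω ^ b → (ω ^ b * γ) ♯ t = ω ^ b * γ + t := by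
    intro γ
    induction γ using Ordinal.induction with
    | _ γ IHγ =>
    intro t
    induction t using Ordinal.induction with
    | _ t IHt =>
    intro ht
    refine le_antisymm ?_ (add_le_nadd _ _)
    rw [nadd_le_iff]
    constructor
    · intro x hx
      have hdiv : x / ω ^ b < γ := (Ordinal.div_lt hω0).2 hx
      have hmod : x % ω ^ b < ω ^ b := mod_lt x hω0
      have hmt : (x % ω ^ b) ♯ t < ω ^ b := hN _ _ hmod ht
      calc x ♯ t = (ω ^ b * (x / ω ^ b) + x % ω ^ b) ♯ t := by rw [Ordinal.div_add_mod]
        _ ≤ ((ω ^ b * (x / ω ^ b)) ♯ (x % ω ^ b)) ♯ t :=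
            nadd_le_nadd_right (add_le_nadd _ _) t
        _ = (ω ^ b * (x / ω ^ b)) ♯ ((x % ω ^ b) ♯ t) := nadd_assoc _ _ _
        _ = ω ^ b * (x / ω ^ b) + ((x % ω ^ b) ♯ t) := IHγ _ hdiv _ hmt
        _ < ω ^ b * (x / ω ^ b) + ω ^ b := add_lt_add_right hmt _
        _ = ω ^ b * succ (x / ω ^ b) := (mul_succ _ _).symm
        _ ≤ ω ^ b * γ := mul_le_mul_right (succ_le_of_lt hdiv) _
        _ ≤ ω ^ b * γ + t := le_self_add
    · intro t' ht'
      rw [IHt t' ht' (ht'.trans ht)]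
      exact add_lt_add_right ht' _
  have hL : ∀ σ τ, (ω ^ b * σ) ♯ (ω ^ b * τ) = ω ^ b * (σ ♯ τ) := by
    suffices h : ∀ γ σ τ, σ ♯ τ < γ → (ω ^ b * σ) ♯ (ω ^ b * τ) = ω ^ b * (σ ♯ τ) by
      intro σ τ
      exact h (succ (σ ♯ τ)) σ τ (lt_succ _)
    intro γ
    induction γ using Ordinal.induction with
    | _ γ IHγ =>
    intro σ τ hστ
    have REC : ∀ σ' τ', σ' ♯ τ' < σ ♯ τ →
        (ω ^ b * σ') ♯ (ω ^ b * τ') = ω ^ b * (σ' ♯ τ') := by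
      intro σ' τ' h
      exact IHγ (σ ♯ τ) hστ σ' τ' h
    refine le_antisymm ?_ ?_
    · rw [nadd_le_iff]
      constructor
      · intro x hx
        have hdiv : x / ω ^ b < σ := (Ordinal.div_lt hω0).2 hx
        have hmod : x % ω ^ b < ω ^ b := mod_lt x hω0
        have hlt : (x / ω ^ b) ♯ τ < σ ♯ τ := nadd_lt_nadd_right hdiv τ
        calc x ♯ (ω ^ b * τ) = (ω ^ b * (x / ω ^ b) + x % ω ^ b) ♯ (ω ^ b * τ) := by
              rw [Ordinal.div_add_mod]
          _ ≤ ((ω ^ b * (x / ω ^ b)) ♯ (x % ω ^ b)) ♯ (ω ^ b * τ) :=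
              nadd_le_nadd_right (add_le_nadd _ _) _
          _ = ((ω ^ b * (x / ω ^ b)) ♯ (ω ^ b * τ)) ♯ (x % ω ^ b) := nadd_right_comm _ _ _
          _ = (ω ^ b * ((x / ω ^ b) ♯ τ)) ♯ (x % ω ^ b) := by rw [REC _ _ hlt]
          _ = ω ^ b * ((x / ω ^ b) ♯ τ) + (x % ω ^ b) := hT _ _ hmod
          _ < ω ^ b * ((x / ω ^ b) ♯ τ) + ω ^ b := add_lt_add_right hmod _
          _ = ω ^ b * succ ((x / ω ^ b) ♯ τ) := (mul_succ _ _).symm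
          _ ≤ ω ^ b * (σ ♯ τ) := mul_le_mul_right (succ_le_of_lt hlt) _
      · intro y hy
        have hdiv : y / ω ^ b < τ := (Ordinal.div_lt hω0).2 hy
        have hmod : y % ω ^ b < ω ^ b := mod_lt y hω0
        have hlt : σ ♯ (y / ω ^ b) < σ ♯ τ := nadd_lt_nadd_left hdiv σ
        calc (ω ^ b * σ) ♯ y = (ω ^ b * σ) ♯ (ω ^ b * (y / ω ^ b) + y % ω ^ b) := by
              rw [Ordinal.div_add_mod]
          _ ≤ (ω ^ b * σ) ♯ ((ω ^ b * (y / ω ^ b)) ♯ (y % ω ^ b)) :=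
              nadd_le_nadd_left (add_le_nadd _ _) _
          _ = ((ω ^ b * σ) ♯ (ω ^ b * (y / ω ^ b))) ♯ (y % ω ^ b) := (nadd_assoc _ _ _).symm
          _ = (ω ^ b * (σ ♯ (y / ω ^ b))) ♯ (y % ω ^ b) := by rw [REC _ _ hlt]
          _ = ω ^ b * (σ ♯ (y / ω ^ b)) + (y % ω ^ b) := hT _ _ hmod
          _ < ω ^ b * (σ ♯ (y / ω ^ b)) + ω ^ b := add_lt_add_right hmod _
          _ = ω ^ b * succ (σ ♯ (y / ω ^ b)) := (mul_succ _ _).symm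
          _ ≤ ω ^ b * (σ ♯ τ) := mul_le_mul_right (succ_le_of_lt hlt) _
    · refine le_of_forall_lt fun z hz => ?_
      have hγ₀ : z / ω ^ b < σ ♯ τ := (Ordinal.div_lt hω0).2 hz
      have hzlt : z < ω ^ b * succ (z / ω ^ b) := by
        conv_lhs => rw [← Ordinal.div_add_mod z (ω ^ b)]
        rw [mul_succ]
        exact add_lt_add_right (mod_lt z hω0) _
      rcases lt_nadd_iff.1 hγ₀ with ⟨σ', hσ', hγσ⟩ | ⟨τ', hτ', hγτ⟩
      · calc z < ω ^ b * succ (z / ω ^ b) := hzlt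
          _ ≤ ω ^ b * succ (σ' ♯ τ) := mul_le_mul_right (succ_le_succ hγσ) _
          _ = ω ^ b * (σ' ♯ τ) + ω ^ b := mul_succ _ _
          _ = ((ω ^ b * σ') ♯ (ω ^ b * τ)) + ω ^ b := by
              rw [REC _ _ (nadd_lt_nadd_right hσ' τ)]
          _ = ((ω ^ b * τ) ♯ (ω ^ b * σ')) + ω ^ b := by rw [nadd_comm]
          _ ≤ (ω ^ b * τ) ♯ (ω ^ b * σ' + ω ^ b) := nadd_add_le' _ _ _
          _ = (ω ^ b * τ) ♯ (ω ^ b * succ σ') := by rw [mul_succ]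
          _ ≤ (ω ^ b * τ) ♯ (ω ^ b * σ) :=
              nadd_le_nadd_left (mul_le_mul_right (succ_le_of_lt hσ') _) _
          _ = (ω ^ b * σ) ♯ (ω ^ b * τ) := nadd_comm _ _
      · calc z < ω ^ b * succ (z / ω ^ b) := hzlt
          _ ≤ ω ^ b * succ (σ ♯ τ') := mul_le_mul_right (succ_le_succ hγτ) _
          _ = ω ^ b * (σ ♯ τ') + ω ^ b := mul_succ _ _
          _ = ((ω ^ b * σ) ♯ (ω ^ b * τ')) + ω ^ b := by
              rw [REC _ _ (nadd_lt_nadd_left hτ' σ)]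
          _ ≤ (ω ^ b * σ) ♯ (ω ^ b * τ' + ω ^ b) := nadd_add_le' _ _ _
          _ = (ω ^ b * σ) ♯ (ω ^ b * succ τ') := by rw [mul_succ]
          _ ≤ (ω ^ b * σ) ♯ (ω ^ b * τ) :=
              nadd_le_nadd_left (mul_le_mul_right (succ_le_of_lt hτ') _) _
  exact ⟨hN, hT, hL⟩

private theorem exists_decomp' : ∀ β : Ordinal.{u}, β ≠ 0 →
    ∃ e τ : Ordinal.{u}, β = ω ^ e * (τ + 1) := by
  intro β
  induction β using Ordinal.induction with
  | _ β IH =>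
  intro hβ
  set L := log ω β with hLdef
  have hω0 : (ω : Ordinal.{u}) ^ L ≠ 0 := opow_ne_zero L omega0_ne_zero
  obtain ⟨c, hc⟩ : ∃ c, β / ω ^ L = c := ⟨_, rfl⟩
  obtain ⟨r, hrr⟩ : ∃ r, β % ω ^ L = r := ⟨_, rfl⟩
  have hr : r < ω ^ L := hrr ▸ mod_lt β hω0
  have hdm : ω ^ L * c + r = β := by rw [← hc, ← hrr]; exact Ordinal.div_add_mod β (ω ^ L)
  rcases eq_or_ne r 0 with rfl | h0
  · have hcc : c < ω := hc ▸ div_opow_log_lt β one_lt_omega0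
    have hpos : 0 < c := hc ▸ div_opow_log_pos ω hβ
    obtain ⟨n, hn⟩ := lt_omega0.1 hcc
    cases n with
    | zero => rw [hn] at hpos; simp at hpos
    | succ m =>
        refine ⟨L, m, ?_⟩
        rw [← hdm, add_zero, hn, Nat.cast_succ]
  · have hrβ : r < β := hr.trans_le (opow_log_le_self ω hβ)
    obtain ⟨e, τ, he⟩ := IH _ hrβ h0
    have heL : e < L := by
      have h1 : ω ^ e ≤ r := by
        rw [he]
        calc (ω : Ordinal.{u}) ^ e = ω ^ e * 1 := (mul_one _).symm
          _ ≤ ω ^ e * (τ + 1) := mul_le_mul_right le_add_self _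
      have h2 := h1.trans_lt hr
      rwa [opow_lt_opow_iff_right one_lt_omega0] at h2
    refine ⟨e, ω ^ (L - e) * c + τ, ?_⟩
    have hsplit : (ω : Ordinal.{u}) ^ L = ω ^ e * ω ^ (L - e) := by
      rw [← opow_add, Ordinal.add_sub_cancel_of_le heL.le]
    rw [← hdm, he, hsplit, mul_assoc, mul_add, mul_add, ← add_assoc, mul_one, mul_add]

private theorem step' (e α β : Ordinal.{u}) (hα : ω ^ e ∣ α) (hβ : ω ^ e ∣ β) :
    α ♯ (β + ω ^ e) = (α ♯ β) + ω ^ e := by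
  obtain ⟨σ, rfl⟩ := hα
  obtain ⟨τ, rfl⟩ := hβ
  have hL := (triple' e).2.2
  calc (ω ^ e * σ) ♯ (ω ^ e * τ + ω ^ e)
      = (ω ^ e * σ) ♯ (ω ^ e * succ τ) := by rw [mul_succ]
    _ = ω ^ e * (σ ♯ succ τ) := hL σ (succ τ)
    _ = ω ^ e * succ (σ ♯ τ) := by rw [nadd_succ]
    _ = ω ^ e * (σ ♯ τ) + ω ^ e := mul_succ _ _
    _ = ((ω ^ e * σ) ♯ (ω ^ e * τ)) + ω ^ e := by rw [hL]

private theorem exists_shuffle' : ∀ γ α β : Ordinal.{u}, α ♯ β = γ →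
    ∃ as bs : List Ordinal.{u}, as.length = bs.length ∧ as.sum = α ∧ bs.sum = β ∧
      (List.zipWith (· + ·) as bs).sum = γ := by
  intro γ
  induction γ using Ordinal.induction with
  | _ γ IH =>
  intro α β hγ
  rcases eq_or_ne β 0 with rfl | hβ
  · exact ⟨[α], [0], rfl, by simp, by simp, by simp [← hγ]⟩
  rcases eq_or_ne α 0 with rfl | hα
  · exact ⟨[0], [β], rfl, by simp, by simp, by simp [← hγ]⟩
  obtain ⟨e₁, σ, hα'⟩ := exists_decomp' α hα
  obtain ⟨e₂, τ, hβ'⟩ := exists_decomp' β hβ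
  rcases le_total e₂ e₁ with he | he
  · have hdα : ω ^ e₂ ∣ α := by
      rw [hα']
      exact dvd_mul_of_dvd_left
        ⟨ω ^ (e₁ - e₂), by rw [← opow_add, Ordinal.add_sub_cancel_of_le he]⟩ _
    have hdβ₁ : ω ^ e₂ ∣ ω ^ e₂ * τ := dvd_mul_right _ _
    have hβs : β = ω ^ e₂ * τ + ω ^ e₂ := by rw [hβ', mul_add, mul_one]
    have hlt : α ♯ (ω ^ e₂ * τ) < γ := by
      rw [← hγ, hβs]
      exact nadd_lt_nadd_left
        (lt_add_of_pos_right _ (opow_pos _ omega0_pos)) α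
    obtain ⟨as, bs, hlen, hsa, hsb, hz⟩ := IH _ hlt α (ω ^ e₂ * τ) rfl
    refine ⟨as ++ [0], bs ++ [ω ^ e₂], by simp [hlen], by simp [hsa], ?_, ?_⟩
    · rw [List.sum_append, hsb, hβs]; simp
    · rw [List.zipWith_append hlen, List.sum_append, hz]
      simp only [List.zipWith_cons_cons, List.zipWith_nil_right, List.sum_cons,
        List.sum_nil, add_zero, zero_add]
      rw [← step' e₂ α (ω ^ e₂ * τ) hdα hdβ₁, ← hβs, hγ]
  · have hdβ : ω ^ e₁ ∣ β := by
      rw [hβ']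
      exact dvd_mul_of_dvd_left
        ⟨ω ^ (e₂ - e₁), by rw [← opow_add, Ordinal.add_sub_cancel_of_le he]⟩ _
    have hdα₁ : ω ^ e₁ ∣ ω ^ e₁ * σ := dvd_mul_right _ _
    have hαs : α = ω ^ e₁ * σ + ω ^ e₁ := by rw [hα', mul_add, mul_one]
    have hlt : (ω ^ e₁ * σ) ♯ β < γ := by
      rw [← hγ, hαs]
      exact nadd_lt_nadd_right
        (lt_add_of_pos_right _ (opow_pos _ omega0_pos)) β
    obtain ⟨as, bs, hlen, hsa, hsb, hz⟩ := IH _ hlt (ω ^ e₁ * σ) β rfl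
    refine ⟨as ++ [ω ^ e₁], bs ++ [0], by simp [hlen], ?_, by simp [hsb], ?_⟩
    · rw [List.sum_append, hsa, hαs]; simp
    · rw [List.zipWith_append hlen, List.sum_append, hz]
      simp only [List.zipWith_cons_cons, List.zipWith_nil_right, List.sum_cons,
        List.sum_nil, add_zero, zero_add]
      have : β ♯ (ω ^ e₁ * σ + ω ^ e₁) = (β ♯ (ω ^ e₁ * σ)) + ω ^ e₁ :=
        step' e₁ β (ω ^ e₁ * σ) hdβ hdα₁
      rw [nadd_comm _ β, ← this, ← hαs, nadd_comm β α, hγ]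

/-- The natural (Hessenberg) sum `α ♯ β` is the supremum of all "shuffled" ordinal sums
`α₁ + β₁ + α₂ + β₂ + ⋯ + αₙ + βₙ` over all decompositions `α = α₁ + ⋯ + αₙ` and
`β = β₁ + ⋯ + βₙ` into ordinal sums. -/
theorem nadd_eq_sSup_shuffles (α β : Ordinal.{u}) :
    α ♯ β = sSup { o : Ordinal.{u} |
      ∃ as bs : List Ordinal.{u}, as.length = bs.length ∧
        as.sum = α ∧ bs.sum = β ∧ (List.zipWith (· + ·) as bs).sum = o } := by
  have hub : ∀ o ∈ { o : Ordinal.{u} |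
      ∃ as bs : List Ordinal.{u}, as.length = bs.length ∧
        as.sum = α ∧ bs.sum = β ∧ (List.zipWith (· + ·) as bs).sum = o }, o ≤ α ♯ β := by
    rintro o ⟨as, bs, hlen, ha, hb, ho⟩
    rw [← ho, ← ha, ← hb]
    exact zip_sum_le' as bs hlen
  have hmem : α ♯ β ∈ { o : Ordinal.{u} |
      ∃ as bs : List Ordinal.{u}, as.length = bs.length ∧
        as.sum = α ∧ bs.sum = β ∧ (List.zipWith (· + ·) as bs).sum = o } := by
    obtain ⟨as, bs, h1, h2, h3, h4⟩ := exists_shuffle' (α ♯ β) α β rfl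
    exact ⟨as, bs, h1, h2, h3, h4⟩
  exact le_antisymm (le_csSup ⟨α ♯ β, hub⟩ hmem) (csSup_le ⟨_, hmem⟩ hub)
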